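/- Define X₁(u,v) = a₁(u⁶ − 15u⁴v² + 15u²v⁴ − v⁶) + i₁(u² − v²), Y₁(u,v) = 2a₁(3u⁵v − 10u³v³ + 3uv⁵) − 2i₁uv, Z₁(u,v) = −2√6·√(2a₁i₁)·uv(u²−v²) for constants a₁, i₁ with a₁i₁ > 0, and r₁(u,v) = (X₁, Y₁, Z₁). Then r₁ is an isothermal parametrization: its first fundamental form satisfies E = G and F = 0. -/

import Mathlib

/-- the degree-6 polynomial chart `r₁[a₁,i₁]` (with `a₁i₁ > 0`)
is an isothermal parametrization: `E = G` and `F = 0`. -/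
theorem r1_isothermal (a₁ i₁ : ℝ) (h : 0 < a₁ * i₁) :
    ∀ u v : ℝ,
      let r : ℝ → ℝ → ℝ × ℝ × ℝ := fun u v =>
        (a₁ * (u ^ 6 - 15 * u ^ 4 * v ^ 2 + 15 * u ^ 2 * v ^ 4 - v ^ 6) +
            i₁ * (u ^ 2 - v ^ 2),
          2 * a₁ * (3 * u ^ 5 * v - 10 * u ^ 3 * v ^ 3 + 3 * u * v ^ 5) -
            2 * i₁ * u * v,
          -2 * Real.sqrt 6 * Real.sqrt (2 * a₁ * i₁) * u * v * (u ^ 2 - v ^ 2))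
      let ru : ℝ × ℝ × ℝ :=
        (deriv (fun s => (r s v).1) u, deriv (fun s => (r s v).2.1) u,
          deriv (fun s => (r s v).2.2) u)
      let rv : ℝ × ℝ × ℝ :=
        (deriv (fun s => (r u s).1) v, deriv (fun s => (r u s).2.1) v,
          deriv (fun s => (r u s).2.2) v)
      let E := ru.1 * ru.1 + ru.2.1 * ru.2.1 + ru.2.2 * ru.2.2
      let F := ru.1 * rv.1 + ru.2.1 * rv.2.1 + ru.2.2 * rv.2.2
      let G := rv.1 * rv.1 + rv.2.1 * rv.2.1 + rv.2.2 * rv.2.2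
      E = G ∧ F = 0 := by
  intro u v
  have h6 : Real.sqrt 6 * Real.sqrt 6 = 6 := Real.mul_self_sqrt (by norm_num)
  have h2 : Real.sqrt (2 * a₁ * i₁) * Real.sqrt (2 * a₁ * i₁) = 2 * a₁ * i₁ :=
    Real.mul_self_sqrt (by nlinarith)
  have hk : (Real.sqrt 6 * Real.sqrt (2 * a₁ * i₁)) *
      (Real.sqrt 6 * Real.sqrt (2 * a₁ * i₁)) = 12 * (a₁ * i₁) := by
    calc (Real.sqrt 6 * Real.sqrt (2 * a₁ * i₁)) * (Real.sqrt 6 * Real.sqrt (2 * a₁ * i₁))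
        = (Real.sqrt 6 * Real.sqrt 6) * (Real.sqrt (2 * a₁ * i₁) * Real.sqrt (2 * a₁ * i₁)) := by
          ring
      _ = 12 * (a₁ * i₁) := by rw [h6, h2]; ring
  simp only
  have hcm : ∀ c x : ℝ, deriv (fun y : ℝ => c * y) x = c := by
    intro c x
    simpa using ((hasDerivAt_id x).const_mul c).deriv
  simp (disch := fun_prop) only [deriv_fun_add, deriv_fun_sub, deriv_fun_mul,
    deriv_const_mul_field', deriv_pow_field, deriv_const', deriv_id'', hcm]
  constructor
  · linear_combination (-4 * u ^ 6 + 60 * u ^ 4 * v ^ 2 - 60 * u ^ 2 * v ^ 4 + 4 * v ^ 6) * hk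
  · linear_combination (12 * u ^ 5 * v - 40 * u ^ 3 * v ^ 3 + 12 * u * v ^ 5) * hk
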